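/- For all real t ≥ 1 and real q ≥ 2, (t+1) * (t^q + 1)^(q-2) ≥ (t^(q-1) + 1)^(q-1). -/

import Mathlib

theorem key_algebraic_inequality (t q : ℝ) (ht : 1 ≤ t) (hq : 2 ≤ q) :
    (t + 1) * (t ^ q + 1) ^ (q - 2) ≥ (t ^ (q - 1) + 1) ^ (q - 1) := by
  have ht0 : (0:ℝ) < t := lt_of_lt_of_le one_pos ht
  rcases eq_or_lt_of_le hq with hq2 | hq2
  · subst hq2
    norm_num
  -- q > 2 case
  have h1 : (0:ℝ) < q - 1 := by linarith
  have h2 : (0:ℝ) < q - 2 := by linarith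
  have hconj : (q - 1).HolderConjugate ((q - 1) / (q - 2)) := by
    rw [Real.holderConjugate_iff]
    constructor
    · linarith
    · field_simp
      ring
  have key := Real.inner_le_Lp_mul_Lq_of_nonneg (Finset.univ : Finset (Fin 2))
      (f := ![t ^ ((1:ℝ)/(q-1)), 1]) (g := ![t ^ (q*(q-2)/(q-1)), 1]) hconj
      (by intro i _; fin_cases i <;> simp <;> positivity)
      (by intro i _; fin_cases i <;> simp <;> positivity)
  rw [Fin.sum_univ_two, Fin.sum_univ_two, Fin.sum_univ_two] at key
  simp only [Matrix.cons_val_zero, Matrix.cons_val_one, Matrix.head_cons, one_mul, mul_one,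
    Real.one_rpow] at key
  rw [← Real.rpow_add ht0] at key
  rw [← Real.rpow_mul ht0.le, ← Real.rpow_mul ht0.le] at key
  have e1 : (1:ℝ)/(q-1) + q*(q-2)/(q-1) = q - 1 := by
    field_simp; ring
  have e2 : (1:ℝ)/(q-1) * (q-1) = 1 := by field_simp
  have e3 : q*(q-2)/(q-1) * ((q-1)/(q-2)) = q := by
    field_simp
  rw [e1, e2, e3, Real.rpow_one] at key
  -- key : t ^ (q-1) + 1 ≤ (t + 1) ^ (1/(q-1)) * (t ^ q + 1) ^ (1/((q-1)/(q-2)))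
  have hb1 : (0:ℝ) ≤ t ^ (q-1) + 1 := by positivity
  have := Real.rpow_le_rpow hb1 key h1.le
  refine le_trans this (le_of_eq ?_)
  rw [Real.mul_rpow (by positivity) (by positivity),
    ← Real.rpow_mul (by positivity), ← Real.rpow_mul (by positivity)]
  rw [one_div_mul_cancel h1.ne', Real.rpow_one]
  congr 1
  rw [one_div_div]
  field_simp
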